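/- For all integers n ≥ 2, m ≥ 1 and 0 ≤ r ≤ m, the F_2-dimension of D_n(r,m) equals Σ_{w=r+1}^{m} C(m,w)(n−1)^w and the F_2-dimension of C_n(r,m) equals Σ_{w=0}^{r} C(m,w)(n−1)^w, where C(m,w) denotes the binomial coefficient. -/

import Mathlib

open Finset

/-- The `l`-th subvector in the concatenation decomposition:
`(subvec v l) i' = v (i'|l)`. -/
def subvec {n m : ℕ} (v : (Fin (m + 1) → Fin n) → ZMod 2) (l : Fin n) :
    (Fin m → Fin n) → ZMod 2 :=
  fun i' => v (Fin.snoc i' l)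

/-- The Berman code `D_n(r,m)`, defined recursively. -/
def BermanD (n : ℕ) : (m : ℕ) → ℕ → Set ((Fin m → Fin n) → ZMod 2)
  | 0, _ => {0}
  | m + 1, r =>
    if r = 0 then {v | ∑ i, v i = 0}
    else if m + 1 ≤ r then {0}
    else {v | (∀ l : Fin n, subvec v l ∈ BermanD n m (r - 1)) ∧
              (fun i' => ∑ l : Fin n, subvec v l i') ∈ BermanD n m r}

/-- The dual Berman code `C_n(r,m)`, defined recursively. -/
def BermanC (n : ℕ) : (m : ℕ) → ℕ → Set ((Fin m → Fin n) → ZMod 2)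
  | 0, _ => Set.univ
  | m + 1, r =>
    if r = 0 then {v | ∃ c : ZMod 2, ∀ i, v i = c}
    else if m + 1 ≤ r then Set.univ
    else {v | ∃ (u : (Fin m → Fin n) → ZMod 2) (w : Fin n → (Fin m → Fin n) → ZMod 2),
            u ∈ BermanC n m r ∧
            (∀ l : Fin n, (l : ℕ) < n - 1 → w l ∈ BermanC n m (r - 1)) ∧
            (∀ l : Fin n, (l : ℕ) = n - 1 → w l = 0) ∧
            (∀ l : Fin n, subvec v l = u + w l)}

/-- Hamming weight of a binary vector. -/
def hwt {n m : ℕ} (v : (Fin m → Fin n) → ZMod 2) : ℕ :=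
  (Finset.univ.filter fun i => v i ≠ 0).card

/-- `preceq j i` means `j ⪯ i`: for every position `k`, either `j k = 0` or `j k = i k`. -/
def preceq {n m : ℕ} (j i : Fin m → Fin n) : Prop :=
  ∀ k, (j k : ℕ) = 0 ∨ j k = i k

instance {n m : ℕ} (j i : Fin m → Fin n) : Decidable (preceq j i) :=
  inferInstanceAs (Decidable (∀ k, (j k : ℕ) = 0 ∨ j k = i k))

/-- Hamming weight of an index tuple. -/
def wtTuple {n m : ℕ} (i : Fin m → Fin n) : ℕ :=
  (Finset.univ.filter fun k => (i k : ℕ) ≠ 0).card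

/-- The vector `c_m(i')`: the indicator of `{i : i ⪯ i'}`. -/
def cVec {n : ℕ} (m : ℕ) (i' : Fin m → Fin n) : (Fin m → Fin n) → ZMod 2 :=
  fun i => if preceq i i' then 1 else 0

/-- The vector `d_m(i')`: the indicator of `{i : i' ⪯ i}`. -/
def dVec {n : ℕ} (m : ℕ) (i' : Fin m → Fin n) : (Fin m → Fin n) → ZMod 2 :=
  fun i => if preceq i' i then 1 else 0

/-- The matrix `A_m = A_1^{⊗m}`: its entry in row `i` and column `j` is `1` iff `j ⪯ i`. -/
def Amat (n m : ℕ) : Matrix (Fin m → Fin n) (Fin m → Fin n) (ZMod 2) :=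
  fun i j => if preceq j i then 1 else 0

-- ### auxiliary

abbrev Vec (n m : ℕ) := (Fin m → Fin n) → ZMod 2

def glue {n m : ℕ} (w : Fin n → Vec n m) : Vec n (m + 1) :=
  fun i => w (i (Fin.last m)) (Fin.init i)

@[simp] lemma subvec_glue {n m : ℕ} (w : Fin n → Vec n m) (l : Fin n) :
    subvec (glue w) l = w l := by
  funext i'
  simp [glue, subvec, Fin.init_snoc]

@[simp] lemma glue_subvec {n m : ℕ} (v : Vec n (m + 1)) :
    glue (fun l => subvec v l) = v := by
  funext i
  simp [glue, subvec, Fin.snoc_init_self]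

def decompEquiv (n m : ℕ) : Vec n (m + 1) ≃ₗ[ZMod 2] (Fin n → Vec n m) where
  toFun v := fun l => subvec v l
  map_add' _ _ := rfl
  map_smul' _ _ := rfl
  invFun := glue
  left_inv v := glue_subvec v
  right_inv w := funext fun l => subvec_glue w l

lemma subvec_add {n m : ℕ} (a b : Vec n (m+1)) (l : Fin n) :
    subvec (a + b) l = subvec a l + subvec b l := rfl

lemma subvec_zero {n m : ℕ} (l : Fin n) : subvec (0 : Vec n (m+1)) l = 0 := rfl

lemma zmod2_cases (c : ZMod 2) : c = 0 ∨ c = 1 := by revert c; decide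

-- sum over the snoc decomposition
lemma sum_snoc {n m : ℕ} (v : Vec n (m+1)) :
    ∑ i, v i = ∑ l : Fin n, ∑ i', subvec v l i' := by
  have hbij : Function.Bijective
      (fun p : Fin n × (Fin m → Fin n) => (Fin.snoc p.2 p.1 : Fin (m + 1) → Fin n)) := by
    constructor
    · intro p q h
      have h1 := congrArg (fun f => f (Fin.last m)) h
      have h2 := congrArg Fin.init h
      simp only [Fin.snoc_last, Fin.init_snoc] at h1 h2
      exact Prod.ext h1 h2
    · intro i
      exact ⟨(i (Fin.last m), Fin.init i), by simp [Fin.snoc_init_self]⟩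
  have h1 : ∑ p : Fin n × (Fin m → Fin n), subvec v p.1 p.2 = ∑ i, v i :=
    Fintype.sum_bijective _ hbij (fun p => subvec v p.1 p.2) v (fun p => rfl)
  rw [← h1]
  simpa using Fintype.sum_prod_type (f := fun p : Fin n × (Fin m → Fin n) => subvec v p.1 p.2)

-- closure

lemma zero_mem_D (n : ℕ) : ∀ m r, (0 : Vec n m) ∈ BermanD n m r := by
  intro m
  induction m with
  | zero => intro r; simp [BermanD]
  | succ m ih =>
    intro r
    by_cases h0 : r = 0
    · subst h0; simp [BermanD]
    · by_cases h1 : m + 1 ≤ r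
      · simp [BermanD, h0, h1]
      · simp only [BermanD, if_neg h0, if_neg h1, Set.mem_setOf_eq]
        refine ⟨fun l => ih _, ?_⟩
        have : (fun i' => ∑ l : Fin n, subvec (0 : Vec n (m+1)) l i') = (0 : Vec n m) := by
          funext i'; simp [subvec_zero]
        rw [this]; exact ih _

lemma add_mem_D (n : ℕ) : ∀ m r (a b : Vec n m),
    a ∈ BermanD n m r → b ∈ BermanD n m r → a + b ∈ BermanD n m r := by
  intro m
  induction m with
  | zero => intro r a b ha hb; simp_all [BermanD]
  | succ m ih =>
    intro r a b ha hb
    by_cases h0 : r = 0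
    · subst h0
      simp only [BermanD, reduceIte, Set.mem_setOf_eq, Pi.add_apply] at ha hb ⊢
      rw [Finset.sum_add_distrib, ha, hb, add_zero]
    · by_cases h1 : m + 1 ≤ r
      · simp only [BermanD, if_neg h0, if_pos h1, Set.mem_singleton_iff] at *
        rw [ha, hb, add_zero]
      · simp only [BermanD, if_neg h0, if_neg h1, Set.mem_setOf_eq] at *
        refine ⟨fun l => ih _ _ _ (ha.1 l) (hb.1 l), ?_⟩
        have : (fun i' => ∑ l : Fin n, subvec (a + b) l i')
            = (fun i' => ∑ l : Fin n, subvec a l i') + fun i' => ∑ l : Fin n, subvec b l i' := by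
          funext i'; simp [subvec_add, Finset.sum_add_distrib]
        rw [this]; exact ih _ _ _ ha.2 hb.2

lemma zero_mem_C (n : ℕ) : ∀ m r, (0 : Vec n m) ∈ BermanC n m r := by
  intro m
  induction m with
  | zero => intro r; simp [BermanC]
  | succ m ih =>
    intro r
    by_cases h0 : r = 0
    · subst h0
      simp only [BermanC, reduceIte, Set.mem_setOf_eq]
      exact ⟨0, fun _ => rfl⟩
    · by_cases h1 : m + 1 ≤ r
      · simp [BermanC, h0, h1]
      · simp only [BermanC, if_neg h0, if_neg h1, Set.mem_setOf_eq]
        exact ⟨0, fun _ => 0, ih _, fun _ _ => ih _, fun _ _ => rfl,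
          fun l => by simp [subvec_zero]⟩

lemma add_mem_C (n : ℕ) : ∀ m r (a b : Vec n m),
    a ∈ BermanC n m r → b ∈ BermanC n m r → a + b ∈ BermanC n m r := by
  intro m
  induction m with
  | zero => intro r a b _ _; simp [BermanC]
  | succ m ih =>
    intro r a b ha hb
    by_cases h0 : r = 0
    · subst h0
      simp only [BermanC, reduceIte, Set.mem_setOf_eq] at *
      obtain ⟨c, hc⟩ := ha; obtain ⟨d, hd⟩ := hb
      exact ⟨c + d, fun i => by simp [hc i, hd i]⟩
    · by_cases h1 : m + 1 ≤ r
      · simp [BermanC, h0, h1]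
      · simp only [BermanC, if_neg h0, if_neg h1, Set.mem_setOf_eq] at *
        obtain ⟨u, w, hu, hw, hw0, hv⟩ := ha
        obtain ⟨u', w', hu', hw', hw0', hv'⟩ := hb
        refine ⟨u + u', w + w', ih _ _ _ hu hu', fun l hl => ih _ _ _ (hw l hl) (hw' l hl),
          fun l hl => by simp [Pi.add_apply, hw0 l hl, hw0' l hl], fun l => ?_⟩
        rw [subvec_add, hv l, hv' l]
        funext i; simp; ring

def Dsub (n m r : ℕ) : Submodule (ZMod 2) (Vec n m) where
  carrier := BermanD n m r
  add_mem' := add_mem_D n m r _ _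
  zero_mem' := zero_mem_D n m r
  smul_mem' c v hv := by
    rcases zmod2_cases c with h | h <;> subst h
    · rw [zero_smul]; exact zero_mem_D n m r
    · rw [one_smul]; exact hv

def Csub (n m r : ℕ) : Submodule (ZMod 2) (Vec n m) where
  carrier := BermanC n m r
  add_mem' := add_mem_C n m r _ _
  zero_mem' := zero_mem_C n m r
  smul_mem' c v hv := by
    rcases zmod2_cases c with h | h <;> subst h
    · rw [zero_smul]; exact zero_mem_C n m r
    · rw [one_smul]; exact hv

lemma span_D (n m r : ℕ) : Submodule.span (ZMod 2) (BermanD n m r) = Dsub n m r :=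
  Submodule.span_eq (Dsub n m r)

lemma span_C (n m r : ℕ) : Submodule.span (ZMod 2) (BermanC n m r) = Csub n m r :=
  Submodule.span_eq (Csub n m r)

-- nesting
lemma D_succ_subset (n : ℕ) : ∀ m r, BermanD n m (r + 1) ⊆ BermanD n m r := by
  intro m
  induction m with
  | zero => intro r v hv; exact hv
  | succ m ih =>
    intro r v hv
    by_cases h1 : m + 1 ≤ r + 1
    · -- source is {0}
      simp only [BermanD, Nat.succ_ne_zero, if_neg, if_pos h1, Set.mem_singleton_iff] at hv
      rw [hv]; exact zero_mem_D n (m + 1) r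
    · -- source recursive
      have h1' : ¬ (r + 1 = 0) := by omega
      simp only [BermanD, if_neg h1', if_neg h1, Set.mem_setOf_eq] at hv
      obtain ⟨hv1, hv2⟩ := hv
      simp only [Nat.add_sub_cancel] at hv1
      by_cases h0 : r = 0
      · subst h0
        simp only [BermanD, reduceIte, Set.mem_setOf_eq]
        rw [sum_snoc v]
        have : ∀ l : Fin n, ∑ i', subvec v l i' = 0 := by
          intro l
          have := hv1 l
          cases m with
          | zero => omega
          | succ m' =>
            simp only [BermanD, reduceIte, Set.mem_setOf_eq] at this
            exact this
        simp [this]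
      · have h2 : ¬ (m + 1 ≤ r) := by omega
        simp only [BermanD, if_neg h0, if_neg h2, Set.mem_setOf_eq]
        obtain ⟨r', rfl⟩ : ∃ r', r = r' + 1 := ⟨r - 1, by omega⟩
        refine ⟨fun l => ?_, ih _ hv2⟩
        simp only [Nat.add_sub_cancel]
        exact ih _ (hv1 l)

lemma D_le (n m : ℕ) {r r' : ℕ} (h : r' ≤ r) : BermanD n m r ⊆ BermanD n m r' := by
  induction r with
  | zero => intro v hv; have : r' = 0 := by omega
            subst this; exact hv
  | succ r ihr =>
    by_cases hr : r' = r + 1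
    · subst hr; exact fun v hv => hv
    · exact fun v hv => ihr (by omega) (D_succ_subset n m r hv)

lemma C_succ_subset (n : ℕ) : ∀ m r, BermanC n m r ⊆ BermanC n m (r + 1) := by
  intro m
  induction m with
  | zero => intro r v hv; exact hv
  | succ m ih =>
    intro r v hv
    by_cases h1 : m + 1 ≤ r + 1
    · simp only [BermanC, Nat.succ_ne_zero, if_neg, if_pos h1]
      trivial
    · have h1' : ¬ (r + 1 = 0) := by omega
      have hm : 1 ≤ m := by omega
      simp only [BermanC, if_neg h1', if_neg h1, Set.mem_setOf_eq, Nat.add_sub_cancel]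
      by_cases h0 : r = 0
      · subst h0
        simp only [BermanC, reduceIte, Set.mem_setOf_eq] at hv
        obtain ⟨c, hc⟩ := hv
        refine ⟨fun _ => c, fun _ => 0, ?_, fun _ _ => zero_mem_C n m 0, fun _ _ => rfl,
          fun l => by funext i'; simp [subvec, hc]⟩
        · have : (fun _ => c : Vec n m) ∈ BermanC n m 0 := by
            cases m with
            | zero => trivial
            | succ m' =>
              simp only [BermanC, reduceIte, Set.mem_setOf_eq]
              exact ⟨c, fun _ => rfl⟩
          exact ih 0 this
      · have h2 : ¬ (m + 1 ≤ r) := by omega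
        simp only [BermanC, if_neg h0, if_neg h2, Set.mem_setOf_eq] at hv
        obtain ⟨u, w, hu, hw, hw0, hvv⟩ := hv
        obtain ⟨r', rfl⟩ : ∃ r', r = r' + 1 := ⟨r - 1, by omega⟩
        exact ⟨u, w, ih _ hu, fun l hl => by
          simpa using ih _ (by simpa using hw l hl), hw0, hvv⟩

lemma C_le (n m : ℕ) {r r' : ℕ} (h : r' ≤ r) : BermanC n m r' ⊆ BermanC n m r := by
  induction r with
  | zero => intro v hv; have : r' = 0 := by omega
            subst this; exact hv
  | succ r ihr =>
    by_cases hr : r' = r + 1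
    · subst hr; exact fun v hv => hv
    · exact fun v hv => C_succ_subset n m r (ihr (by omega) hv)

-- finrank of a pi submodule
def piSubEquiv {K : Type*} [Field K] {ι : Type*} [Fintype ι] {M : ι → Type*}
    [∀ i, AddCommGroup (M i)] [∀ i, Module K (M i)] (p : ∀ i, Submodule K (M i)) :
    ↥(Submodule.pi Set.univ p) ≃ₗ[K] ((i : ι) → ↥(p i)) where
  toFun x i := ⟨x.1 i, (Submodule.mem_pi.mp x.2) i (Set.mem_univ i)⟩
  map_add' x y := rfl
  map_smul' c x := rfl
  invFun x := ⟨fun i => (x i).1, fun i _ => (x i).2⟩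
  left_inv x := rfl
  right_inv x := rfl

lemma finrank_pi_submodule {K : Type*} [Field K] {ι : Type*} [Fintype ι] {M : ι → Type*}
    [∀ i, AddCommGroup (M i)] [∀ i, Module K (M i)] [∀ i, FiniteDimensional K (M i)]
    (p : ∀ i, Submodule K (M i)) :
    Module.finrank K ↥(Submodule.pi Set.univ p) = ∑ i, Module.finrank K ↥(p i) := by
  rw [(piSubEquiv p).finrank_eq, Module.finrank_pi_fintype]

-- the coordinate changes on `Fin (k+2) → Vec (k+2) m`
def psiD (k m : ℕ) :
    (Fin (k + 2) → Vec (k + 2) m) ≃ₗ[ZMod 2] (Fin (k + 2) → Vec (k + 2) m) where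
  toFun w l := if l = Fin.last (k + 1) then ∑ l', w l' else w l
  map_add' a b := by
    funext l
    by_cases h : l = Fin.last (k + 1) <;> simp [h, Finset.sum_add_distrib]
  map_smul' c a := by
    funext l
    by_cases h : l = Fin.last (k + 1) <;> simp [h, Finset.smul_sum]
  invFun u l := if l = Fin.last (k + 1) then
      u l - ∑ l' ∈ Finset.univ.erase (Fin.last (k + 1)), u l' else u l
  left_inv w := by
    funext l
    by_cases h : l = Fin.last (k + 1)
    · subst h
      simp only [if_pos rfl]
      have he : ∑ l' ∈ Finset.univ.erase (Fin.last (k + 1)),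
          (if l' = Fin.last (k + 1) then ∑ l'', w l'' else w l') =
          ∑ l' ∈ Finset.univ.erase (Fin.last (k + 1)), w l' := by
        refine Finset.sum_congr rfl fun l' hl' => ?_
        rw [if_neg (Finset.mem_erase.1 hl').1]
      rw [he]
      have := Finset.sum_erase_add Finset.univ w (Finset.mem_univ (Fin.last (k + 1)))
      exact (eq_sub_of_add_eq' this).symm
    · simp [h]
  right_inv u := by
    funext l
    by_cases h : l = Fin.last (k + 1)
    · subst h
      simp only [if_pos rfl]
      have he : ∑ l', (if l' = Fin.last (k + 1) then
          u l' - ∑ l'' ∈ Finset.univ.erase (Fin.last (k + 1)), u l'' else u l') =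
          (∑ l' ∈ Finset.univ.erase (Fin.last (k + 1)), u l') +
            (u (Fin.last (k + 1)) - ∑ l'' ∈ Finset.univ.erase (Fin.last (k + 1)), u l'') := by
        rw [← Finset.sum_erase_add Finset.univ _ (Finset.mem_univ (Fin.last (k + 1)))]
        congr 1
        · refine Finset.sum_congr rfl fun l' hl' => ?_
          rw [if_neg (Finset.mem_erase.1 hl').1]
        · rw [if_pos rfl]
      rw [he]
      exact add_sub_cancel _ _
    · simp [h]

def psiC (k m : ℕ) :
    (Fin (k + 2) → Vec (k + 2) m) ≃ₗ[ZMod 2] (Fin (k + 2) → Vec (k + 2) m) where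
  toFun w l := if l = Fin.last (k + 1) then w l else w l - w (Fin.last (k + 1))
  map_add' a b := by
    funext l
    by_cases h : l = Fin.last (k + 1) <;> simp [h] <;> abel
  map_smul' c a := by
    funext l
    by_cases h : l = Fin.last (k + 1) <;> simp [h, smul_sub]
  invFun u l := if l = Fin.last (k + 1) then u l else u l + u (Fin.last (k + 1))
  left_inv w := by
    funext l
    by_cases h : l = Fin.last (k + 1) <;> simp [h]
  right_inv u := by
    funext l
    by_cases h : l = Fin.last (k + 1) <;> simp [h]

def ED (k m : ℕ) : Vec (k + 2) (m + 1) ≃ₗ[ZMod 2] (Fin (k + 2) → Vec (k + 2) m) :=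
  (decompEquiv (k + 2) m).trans (psiD k m)

def EC (k m : ℕ) : Vec (k + 2) (m + 1) ≃ₗ[ZMod 2] (Fin (k + 2) → Vec (k + 2) m) :=
  (decompEquiv (k + 2) m).trans (psiC k m)

@[simp] lemma ED_apply (k m : ℕ) (v : Vec (k + 2) (m + 1)) (l : Fin (k + 2)) :
    ED k m v l = if l = Fin.last (k + 1) then ∑ l', subvec v l' else subvec v l := rfl

@[simp] lemma EC_apply (k m : ℕ) (v : Vec (k + 2) (m + 1)) (l : Fin (k + 2)) :
    EC k m v l = if l = Fin.last (k + 1) then subvec v l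
      else subvec v l - subvec v (Fin.last (k + 1)) := rfl

lemma sum_subvec_eq (k m : ℕ) (v : Vec (k + 2) (m + 1)) :
    (∑ l', subvec v l') = (fun i' => ∑ l : Fin (k + 2), subvec v l i') := by
  funext i'; simp

lemma D_comap (k m r : ℕ) (hr1 : 1 ≤ r) (hr2 : r ≤ m) :
    Dsub (k + 2) (m + 1) r = Submodule.comap (ED k m).toLinearMap
      (Submodule.pi Set.univ fun l =>
        if l = Fin.last (k + 1) then Dsub (k + 2) m r else Dsub (k + 2) m (r - 1)) := by
  have h0 : ¬ (r = 0) := by omega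
  have h1 : ¬ (m + 1 ≤ r) := by omega
  ext v
  rw [Submodule.mem_comap, Submodule.mem_pi]
  have hmem : v ∈ Dsub (k + 2) (m + 1) r ↔
      (∀ l : Fin (k + 2), subvec v l ∈ BermanD (k + 2) m (r - 1)) ∧
      (fun i' => ∑ l : Fin (k + 2), subvec v l i') ∈ BermanD (k + 2) m r := by
    show v ∈ BermanD (k + 2) (m + 1) r ↔ _
    simp only [BermanD, if_neg h0, if_neg h1, Set.mem_setOf_eq]
  rw [hmem]
  constructor
  · rintro ⟨hv1, hv2⟩ l _
    by_cases h : l = Fin.last (k + 1)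
    · subst h
      simp only [LinearEquiv.coe_coe, ED_apply, if_pos rfl]
      show (∑ l', subvec v l') ∈ BermanD (k + 2) m r
      rw [sum_subvec_eq]; exact hv2
    · simp only [LinearEquiv.coe_coe, ED_apply, if_neg h]
      exact hv1 l
  · intro h
    have hlast := h (Fin.last (k + 1)) (Set.mem_univ _)
    simp only [LinearEquiv.coe_coe, ED_apply, if_pos rfl] at hlast
    have hsum : (∑ l', subvec v l') ∈ Dsub (k + 2) m r := hlast
    have hoth : ∀ l : Fin (k + 2), l ≠ Fin.last (k + 1) →
        subvec v l ∈ Dsub (k + 2) m (r - 1) := by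
      intro l hl
      have := h l (Set.mem_univ _)
      simp only [LinearEquiv.coe_coe, ED_apply, if_neg hl] at this
      exact this
    refine ⟨fun l => ?_, by rw [← sum_subvec_eq]; exact hsum⟩
    by_cases hl : l = Fin.last (k + 1)
    · subst hl
      have heq : subvec v (Fin.last (k + 1)) = (∑ l', subvec v l') -
          ∑ l' ∈ Finset.univ.erase (Fin.last (k + 1)), subvec v l' := by
        have := Finset.sum_erase_add Finset.univ (fun l' => subvec v l')
          (Finset.mem_univ (Fin.last (k + 1)))
        simpa using (eq_sub_of_add_eq' this).symm
      show subvec v (Fin.last (k + 1)) ∈ Dsub (k + 2) m (r - 1)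
      rw [heq]
      refine Submodule.sub_mem _ ?_ (Submodule.sum_mem _ fun l' hl' => ?_)
      · exact D_le (k + 2) m (by omega : r - 1 ≤ r) hsum
      · exact hoth l' (Finset.mem_erase.1 hl').1
    · exact hoth l hl

lemma C_comap (k m r : ℕ) (hr1 : 1 ≤ r) (hr2 : r ≤ m) :
    Csub (k + 2) (m + 1) r = Submodule.comap (EC k m).toLinearMap
      (Submodule.pi Set.univ fun l =>
        if l = Fin.last (k + 1) then Csub (k + 2) m r else Csub (k + 2) m (r - 1)) := by
  have h0 : ¬ (r = 0) := by omega
  have h1 : ¬ (m + 1 ≤ r) := by omega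
  have hlastval : ((Fin.last (k + 1) : Fin (k + 2)) : ℕ) = (k + 2) - 1 := rfl
  ext v
  rw [Submodule.mem_comap, Submodule.mem_pi]
  have hmem : v ∈ Csub (k + 2) (m + 1) r ↔
      ∃ (u : Vec (k + 2) m) (w : Fin (k + 2) → Vec (k + 2) m),
        u ∈ BermanC (k + 2) m r ∧
        (∀ l : Fin (k + 2), (l : ℕ) < (k + 2) - 1 → w l ∈ BermanC (k + 2) m (r - 1)) ∧
        (∀ l : Fin (k + 2), (l : ℕ) = (k + 2) - 1 → w l = 0) ∧
        (∀ l : Fin (k + 2), subvec v l = u + w l) := by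
    show v ∈ BermanC (k + 2) (m + 1) r ↔ _
    simp only [BermanC, if_neg h0, if_neg h1, Set.mem_setOf_eq]
  rw [hmem]
  have hval : ∀ l : Fin (k + 2), l ≠ Fin.last (k + 1) ↔ (l : ℕ) < (k + 2) - 1 := by
    intro l
    simp only [ne_eq, Fin.ext_iff, hlastval]
    have := l.isLt
    omega
  constructor
  · rintro ⟨u, w, hu, hw, hw0, hv⟩ l _
    have hulast : subvec v (Fin.last (k + 1)) = u := by
      rw [hv (Fin.last (k + 1)), hw0 (Fin.last (k + 1)) hlastval, add_zero]
    by_cases h : l = Fin.last (k + 1)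
    · subst h
      simp only [LinearEquiv.coe_coe, EC_apply, if_pos rfl]
      show subvec v (Fin.last (k + 1)) ∈ BermanC (k + 2) m r
      rw [hulast]; exact hu
    · simp only [LinearEquiv.coe_coe, EC_apply, if_neg h]
      show subvec v l - subvec v (Fin.last (k + 1)) ∈ Csub (k + 2) m (r - 1)
      rw [hulast, hv l, add_sub_cancel_left]
      exact hw l ((hval l).1 h)
  · intro h
    have hlast := h (Fin.last (k + 1)) (Set.mem_univ _)
    simp only [LinearEquiv.coe_coe, EC_apply, if_pos rfl] at hlast
    refine ⟨subvec v (Fin.last (k + 1)),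
      fun l => if l = Fin.last (k + 1) then 0 else subvec v l - subvec v (Fin.last (k + 1)),
      hlast, fun l hl => ?_, fun l hl => ?_, fun l => ?_⟩
    · have hne : l ≠ Fin.last (k + 1) := (hval l).2 hl
      simp only [if_neg hne]
      have := h l (Set.mem_univ _)
      simp only [LinearEquiv.coe_coe, EC_apply, if_neg hne] at this
      exact this
    · have hle : l = Fin.last (k + 1) := Fin.ext (by omega)
      simp only [if_pos hle]
    · by_cases hh : l = Fin.last (k + 1)
      · subst hh; simp
      · simp only [if_neg hh]
        abel

open Module

lemma sum_if_last (k : ℕ) (a b : ℕ) :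
    (∑ l : Fin (k + 2), if l = Fin.last (k + 1) then b else a) = (k + 1) * a + b := by
  rw [← Finset.sum_erase_add _ _ (Finset.mem_univ (Fin.last (k + 1))), if_pos rfl]
  congr 1
  rw [Finset.sum_congr rfl (fun l hl => if_neg (Finset.mem_erase.1 hl).1),
    Finset.sum_const, Finset.card_erase_of_mem (Finset.mem_univ _), Finset.card_univ,
    Fintype.card_fin, smul_eq_mul]
  norm_num

lemma finrank_D_rec (k m r : ℕ) (hr1 : 1 ≤ r) (hr2 : r ≤ m) :
    finrank (ZMod 2) ↥(Dsub (k + 2) (m + 1) r) =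
      (k + 1) * finrank (ZMod 2) ↥(Dsub (k + 2) m (r - 1))
        + finrank (ZMod 2) ↥(Dsub (k + 2) m r) := by
  rw [D_comap k m r hr1 hr2, Submodule.comap_equiv_eq_map_symm,
    LinearEquiv.finrank_map_eq, finrank_pi_submodule]
  rw [← sum_if_last k]
  refine Finset.sum_congr rfl fun l _ => ?_
  by_cases h : l = Fin.last (k + 1)
  · rw [if_pos h, if_pos h]
  · rw [if_neg h, if_neg h]

lemma finrank_C_rec (k m r : ℕ) (hr1 : 1 ≤ r) (hr2 : r ≤ m) :
    finrank (ZMod 2) ↥(Csub (k + 2) (m + 1) r) =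
      (k + 1) * finrank (ZMod 2) ↥(Csub (k + 2) m (r - 1))
        + finrank (ZMod 2) ↥(Csub (k + 2) m r) := by
  rw [C_comap k m r hr1 hr2, Submodule.comap_equiv_eq_map_symm,
    LinearEquiv.finrank_map_eq, finrank_pi_submodule]
  rw [← sum_if_last k]
  refine Finset.sum_congr rfl fun l _ => ?_
  by_cases h : l = Fin.last (k + 1)
  · rw [if_pos h, if_pos h]
  · rw [if_neg h, if_neg h]

-- base-case dimensions
lemma finrank_vec (n m : ℕ) : finrank (ZMod 2) (Vec n m) = n ^ m := by
  rw [Module.finrank_fintype_fun_eq_card, Fintype.card_fun, Fintype.card_fin, Fintype.card_fin]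

lemma Dsub_top_eq_bot (n m : ℕ) : Dsub n m m = ⊥ := by
  ext v
  simp only [Submodule.mem_bot]
  show v ∈ BermanD n m m ↔ v = 0
  cases m with
  | zero => simp [BermanD]
  | succ m => simp [BermanD, Nat.succ_ne_zero]

lemma Csub_top_eq_top (n m : ℕ) : Csub n m m = ⊤ := by
  ext v
  simp only [Submodule.mem_top, iff_true]
  show v ∈ BermanC n m m
  cases m with
  | zero => trivial
  | succ m =>
    simp only [BermanC, Nat.succ_ne_zero, if_neg, le_refl, if_pos]
    trivial

lemma finrank_D_zero (n m : ℕ) (hn : 1 ≤ n) :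
    finrank (ZMod 2) ↥(Dsub n (m + 1) 0) = n ^ (m + 1) - 1 := by
  classical
  let f : Vec n (m + 1) →ₗ[ZMod 2] ZMod 2 :=
    { toFun := fun v => ∑ i, v i
      map_add' := fun a b => by simp [Finset.sum_add_distrib]
      map_smul' := fun c a => by simp [Finset.mul_sum] }
  have hker : Dsub n (m + 1) 0 = LinearMap.ker f := by
    ext v
    show v ∈ BermanD n (m + 1) 0 ↔ _
    simp only [BermanD, reduceIte, Set.mem_setOf_eq, LinearMap.mem_ker]
    rfl
  have hsurj : Function.Surjective f := by
    intro c
    have : Nonempty (Fin (m + 1) → Fin n) := ⟨fun _ => ⟨0, by omega⟩⟩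
    obtain ⟨i₀⟩ := this
    refine ⟨fun i => if i = i₀ then c else 0, ?_⟩
    show (∑ i, if i = i₀ then c else 0) = c
    simp [Finset.sum_ite_eq']
  have := f.finrank_range_add_finrank_ker
  rw [LinearMap.range_eq_top.2 hsurj, finrank_top, Module.finrank_self] at this
  rw [hker]
  have hv := finrank_vec n (m + 1)
  omega

lemma finrank_C_zero (n m : ℕ) (hn : 1 ≤ n) :
    finrank (ZMod 2) ↥(Csub n (m + 1) 0) = 1 := by
  classical
  let f : ZMod 2 →ₗ[ZMod 2] Vec n (m + 1) :=
    { toFun := fun c _ => c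
      map_add' := fun a b => rfl
      map_smul' := fun c a => rfl }
  have hrange : Csub n (m + 1) 0 = LinearMap.range f := by
    ext v
    show v ∈ BermanC n (m + 1) 0 ↔ _
    simp only [BermanC, reduceIte, Set.mem_setOf_eq, LinearMap.mem_range]
    constructor
    · rintro ⟨c, hc⟩; exact ⟨c, by funext i; exact (hc i).symm⟩
    · rintro ⟨c, hc⟩; exact ⟨c, fun i => by rw [← hc]; rfl⟩
  have hinj : Function.Injective f := by
    intro a b hab
    have : Nonempty (Fin (m + 1) → Fin n) := ⟨fun _ => ⟨0, by omega⟩⟩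
    obtain ⟨i₀⟩ := this
    exact congrFun hab i₀
  rw [hrange, LinearMap.finrank_range_of_inj hinj, Module.finrank_self]

-- arithmetic
lemma binom_sum (x M : ℕ) :
    ∑ w ∈ Finset.range (M + 1), M.choose w * x ^ w = (x + 1) ^ M := by
  rw [add_pow x 1 M]
  refine Finset.sum_congr rfl fun w _ => ?_
  simp [mul_comm]

lemma complement_sum (x M r : ℕ) (h : r ≤ M) :
    (∑ w ∈ Finset.range (r + 1), M.choose w * x ^ w)
      + ∑ w ∈ Finset.Icc (r + 1) M, M.choose w * x ^ w = (x + 1) ^ M := by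
  rw [← binom_sum x M, Finset.range_eq_Ico, ← Finset.Ico_add_one_right_eq_Icc (r + 1) M]
  rw [Finset.range_eq_Ico]
  exact Finset.sum_Ico_consecutive (fun w => M.choose w * x ^ w) (by omega) (by omega)

lemma g_rec (x M s : ℕ) :
    ∑ w ∈ Finset.range (s + 2), (M + 1).choose w * x ^ w
      = x * (∑ w ∈ Finset.range (s + 1), M.choose w * x ^ w)
        + ∑ w ∈ Finset.range (s + 2), M.choose w * x ^ w := by
  rw [Finset.sum_range_succ' (fun w => (M + 1).choose w * x ^ w) (s + 1),
      Finset.sum_range_succ' (fun w => M.choose w * x ^ w) (s + 1)]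
  simp only [Nat.choose_succ_succ]
  have h : ∀ w ∈ Finset.range (s + 1),
      (M.choose w + M.choose (w + 1)) * x ^ (w + 1)
        = x * (M.choose w * x ^ w) + M.choose (w + 1) * x ^ (w + 1) := fun w _ => by ring
  rw [Finset.sum_congr rfl h, Finset.sum_add_distrib, ← Finset.mul_sum]
  simp only [Nat.choose_zero_right, pow_zero, mul_one]
  ring

lemma mainDim (k : ℕ) : ∀ m r, r ≤ m →
    finrank (ZMod 2) ↥(Dsub (k + 2) m r)
        = ∑ w ∈ Finset.Icc (r + 1) m, m.choose w * (k + 1) ^ w ∧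
    finrank (ZMod 2) ↥(Csub (k + 2) m r)
        = ∑ w ∈ Finset.range (r + 1), m.choose w * (k + 1) ^ w := by
  intro m
  induction m with
  | zero =>
    intro r hr
    obtain rfl : r = 0 := by omega
    constructor
    · rw [Dsub_top_eq_bot, finrank_bot]
      simp
    · rw [Csub_top_eq_top, finrank_top, finrank_vec]
      simp
  | succ m ih =>
    intro r hr
    by_cases h0 : r = 0
    · subst h0
      constructor
      · rw [finrank_D_zero (k + 2) m (by omega)]
        have hc := complement_sum (k + 1) (m + 1) 0 (by omega)
        rw [show k + 1 + 1 = k + 2 from rfl] at hc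
        simp only [zero_add, Finset.sum_range_one, Nat.choose_zero_right, pow_zero,
          mul_one] at hc ⊢
        rw [← hc]
        exact Nat.add_sub_cancel_left 1 _
      · rw [finrank_C_zero (k + 2) m (by omega)]
        simp
    · by_cases h1 : r = m + 1
      · subst h1
        constructor
        · rw [Dsub_top_eq_bot, finrank_bot, Finset.Icc_eq_empty (by omega), Finset.sum_empty]
        · rw [Csub_top_eq_top, finrank_top, finrank_vec, ← binom_sum (k + 1) (m + 1)]
      · obtain ⟨s, rfl⟩ : ∃ s, r = s + 1 := ⟨r - 1, by omega⟩
        have hs : s ≤ m := by omega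
        have hs1 : s + 1 ≤ m := by omega
        obtain ⟨ihD0, ihC0⟩ := ih s hs
        obtain ⟨ihD1, ihC1⟩ := ih (s + 1) hs1
        have c1 := complement_sum (k + 1) m s hs
        have c2 := complement_sum (k + 1) m (s + 1) hs1
        have c3 := complement_sum (k + 1) (m + 1) (s + 1) (by omega)
        have c4 := g_rec (k + 1) m s
        constructor
        · rw [finrank_D_rec k m (s + 1) (by omega) (by omega)]
          have hred : s + 1 - 1 = s := rfl
          rw [hred, ihD0, ihD1]
          -- pure arithmetic now
          set x := k + 1 with hx
          set gs := ∑ w ∈ Finset.range (s + 1), m.choose w * x ^ w with hgs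
          set gs1 := ∑ w ∈ Finset.range (s + 2), m.choose w * x ^ w with hgs1
          set fs := ∑ w ∈ Finset.Icc (s + 1) m, m.choose w * x ^ w with hfs
          set fs1 := ∑ w ∈ Finset.Icc (s + 2) m, m.choose w * x ^ w with hfs1
          set G := ∑ w ∈ Finset.range (s + 2), (m + 1).choose w * x ^ w with hG
          set F := ∑ w ∈ Finset.Icc (s + 2) (m + 1), (m + 1).choose w * x ^ w with hF
          have l1 : F + (x * gs + gs1) = (x + 1) ^ (m + 1) := by
            rw [← c4]; omega
          have l2 : (x * fs + fs1) + (x * gs + gs1) = (x + 1) ^ (m + 1) := by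
            have e1 : (x * fs + fs1) + (x * gs + gs1) = x * (gs + fs) + (gs1 + fs1) := by ring
            rw [e1, c1, c2, pow_succ]
            ring
          exact Nat.add_right_cancel (l2.trans l1.symm)
        · rw [finrank_C_rec k m (s + 1) (by omega) (by omega)]
          have hred : s + 1 - 1 = s := rfl
          rw [hred, ihC0, ihC1]
          exact (g_rec (k + 1) m s).symm

/-- dimensions of the Berman code and the dual Berman code. -/
theorem berman_dim (n m r : ℕ) (hn : 2 ≤ n) (hm : 1 ≤ m) (hr : r ≤ m) :
    Module.finrank (ZMod 2) ↥(Submodule.span (ZMod 2) (BermanD n m r)) =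
      ∑ w ∈ Finset.Icc (r + 1) m, m.choose w * (n - 1) ^ w ∧
    Module.finrank (ZMod 2) ↥(Submodule.span (ZMod 2) (BermanC n m r)) =
      ∑ w ∈ Finset.range (r + 1), m.choose w * (n - 1) ^ w := by
  obtain ⟨k, rfl⟩ : ∃ k, n = k + 2 := ⟨n - 2, by omega⟩
  rw [span_D, span_C]
  have hred : k + 2 - 1 = k + 1 := rfl
  rw [hred]
  exact mainDim k m r hr
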